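/- Assume the random flow setup below and let t* = min(1/(2‖D^{(1)}V‖_{∞,M}), t₀) (with 1/0 := ∞). Then for all t ∈ (0, t*], all x ∈ K, and all i ∈ {1,…,n}, the partial derivative ∂_i T_t g(x) exists and ∂_i T_t g(x) = E[ ∇g(Y^x(t,·)) · D_iY^x(t,·) ], where for each ω, D_iY^x(t,ω) := lim_{u→0} (Y^{x+u e_i}(t,ω) − Y^x(t,ω))/u (this limit exists) and · denotes the Euclidean inner product on ℝⁿ. -/

import Mathlib

open MeasureTheory Filter Topology Set

/-- The partial derivative of `g : ℝⁿ → ℝ` in the `i`-th coordinate direction. -/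
noncomputable def pderiv' {n : ℕ} (i : Fin n) (g : (Fin n → ℝ) → ℝ) : (Fin n → ℝ) → ℝ :=
  fun x => fderiv ℝ g x (Pi.single i 1)

/-- The iterated partial derivative `D^β g` associated with a multi-index `β : Fin n → ℕ`. -/
noncomputable def mderiv' {n : ℕ} (β : Fin n → ℕ) (g : (Fin n → ℝ) → ℝ) : (Fin n → ℝ) → ℝ :=
  (List.finRange n).foldr (fun i h => (pderiv' i)^[β i] h) g

/-- `‖D^{(j)}V‖_{∞,U} = Σ_{|β|=j} Σ_{k=1}^{n} sup_{x∈U} |D^β V_k(x)|`. -/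
noncomputable def DjNorm {n : ℕ} (j : ℕ) (V : (Fin n → ℝ) → Fin n → ℝ)
    (U : Set (Fin n → ℝ)) : ℝ :=
  ∑ β ∈ Finset.univ.filter (fun β : Fin n → Fin (j + 1) => ∑ i, (β i : ℕ) = j),
    ∑ k : Fin n,
      sSup ((fun x => |mderiv' (fun i => (β i : ℕ)) (fun z => V z k) x|) '' U)

/-- `t* = min(1/(2‖D^{(1)}V‖_{∞,M}), t₀)`, with the convention `1/0 = ∞`. -/
noncomputable def tstar {n : ℕ} (V : (Fin n → ℝ) → Fin n → ℝ) (M : Set (Fin n → ℝ))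
    (t₀ : ℝ) : ℝ :=
  if DjNorm 1 V M = 0 then t₀ else min (1 / (2 * DjNorm 1 V M)) t₀

section Helpers

lemma mderiv'_zero {n : ℕ} (g : (Fin n → ℝ) → ℝ) : mderiv' (fun _ => 0) g = g := by
  unfold mderiv'
  induction (List.finRange n) with
  | nil => rfl
  | cons a l ih => simpa using ih

lemma foldr_indicator {n m : ℕ} (i : Fin n) (g : (Fin n → ℝ) → ℝ) :
    ∀ l : List (Fin n),
      l.foldr (fun j h => (pderiv' j)^[if j = i then m else 0] h) g
        = (pderiv' i)^[m * l.count i] g := by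
  intro l
  induction l with
  | nil => simp
  | cons a l ih =>
    by_cases ha : a = i
    · subst ha
      simp only [List.foldr, if_pos rfl, ih, List.count_cons_self, if_true]
      rw [mul_add, mul_one, add_comm (m * List.count a l) m, Function.iterate_add_apply]
    · simp only [List.foldr, if_neg ha, ih, Function.iterate_zero_apply]
      rw [List.count_cons_of_ne ha]

lemma mderiv'_indicator {n m : ℕ} (i : Fin n) (g : (Fin n → ℝ) → ℝ) :
    mderiv' (fun j => if j = i then m else 0) g = (pderiv' i)^[m] g := by
  unfold mderiv'
  rw [foldr_indicator i g (List.finRange n)]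
  congr 1
  rw [List.count_eq_one_of_mem (List.nodup_finRange n) (List.mem_finRange i), mul_one]

lemma mderiv'_single {n : ℕ} (i : Fin n) (g : (Fin n → ℝ) → ℝ) :
    mderiv' (fun j => if j = i then 1 else 0) g = pderiv' i g := by
  rw [mderiv'_indicator]; rfl

lemma mderiv'_double {n : ℕ} (i : Fin n) (g : (Fin n → ℝ) → ℝ) :
    mderiv' (fun j => if j = i then 2 else 0) g = pderiv' i (pderiv' i g) := by
  rw [mderiv'_indicator]; rfl

lemma foldr_pair {n : ℕ} (i j : Fin n) (hij : i ≠ j) (g : (Fin n → ℝ) → ℝ) :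
    ∀ l : List (Fin n), l.Nodup →
      (i ∈ l → j ∈ l →
        (l.foldr (fun k h => (pderiv' k)^[if k = i then 1 else if k = j then 1 else 0] h) g
          = pderiv' i (pderiv' j g) ∨
         l.foldr (fun k h => (pderiv' k)^[if k = i then 1 else if k = j then 1 else 0] h) g
          = pderiv' j (pderiv' i g))) ∧
      (i ∈ l → j ∉ l →
        l.foldr (fun k h => (pderiv' k)^[if k = i then 1 else if k = j then 1 else 0] h) g
          = pderiv' i g) ∧
      (i ∉ l → j ∈ l →
        l.foldr (fun k h => (pderiv' k)^[if k = i then 1 else if k = j then 1 else 0] h) g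
          = pderiv' j g) ∧
      (i ∉ l → j ∉ l →
        l.foldr (fun k h => (pderiv' k)^[if k = i then 1 else if k = j then 1 else 0] h) g
          = g) := by
  intro l
  induction l with
  | nil => simp
  | cons a l ih =>
    intro hnd
    obtain ⟨hal, hndl⟩ := List.nodup_cons.1 hnd
    obtain ⟨ih1, ih2, ih3, ih4⟩ := ih hndl
    by_cases hai : a = i
    · subst hai
      have hanl : a ∉ l := hal
      have e1 : (if a = a then 1 else if a = j then 1 else 0) = 1 := if_pos rfl
      refine ⟨?_, ?_, ?_, ?_⟩
      · intro _ hjl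
        have hjl' : j ∈ l := by
          rcases List.mem_cons.1 hjl with h | h
          · exact absurd h.symm hij
          · exact h
        left
        rw [List.foldr_cons]; rw [e1, Function.iterate_one]
        rw [ih3 hanl hjl']
      · intro _ hjnl
        rw [List.foldr_cons]; rw [e1, Function.iterate_one]
        rw [ih4 hanl (fun h => hjnl (List.mem_cons_of_mem _ h))]
      · intro hni _; exact absurd List.mem_cons_self hni
      · intro hni _; exact absurd List.mem_cons_self hni
    · by_cases haj : a = j
      · subst haj
        have hanl : a ∉ l := hal
        have e1 : (if a = i then 1 else if a = a then 1 else 0) = 1 := by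
          rw [if_neg hai, if_pos rfl]
        refine ⟨?_, ?_, ?_, ?_⟩
        · intro hil _
          have hil' : i ∈ l := by
            rcases List.mem_cons.1 hil with h | h
            · exact absurd h hij
            · exact h
          right
          rw [List.foldr_cons]; rw [e1, Function.iterate_one]
          rw [ih2 hil' hanl]
        · intro hil hjn; exact absurd List.mem_cons_self hjn
        · intro hinl _
          rw [List.foldr_cons]; rw [e1, Function.iterate_one]
          rw [ih4 (fun h => hinl (List.mem_cons_of_mem _ h)) hanl]
        · intro _ hjn; exact absurd List.mem_cons_self hjn
      · have e0 : (if a = i then 1 else if a = j then 1 else 0) = 0 := by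
          rw [if_neg hai, if_neg haj]
        refine ⟨?_, ?_, ?_, ?_⟩
        · intro hil hjl
          have hil' : i ∈ l := by rcases List.mem_cons.1 hil with h|h; exact absurd h.symm hai; exact h
          have hjl' : j ∈ l := by rcases List.mem_cons.1 hjl with h|h; exact absurd h.symm haj; exact h
          rw [List.foldr_cons]; rw [e0, Function.iterate_zero_apply]
          exact ih1 hil' hjl'
        · intro hil hjnl
          have hil' : i ∈ l := by rcases List.mem_cons.1 hil with h|h; exact absurd h.symm hai; exact h
          rw [List.foldr_cons]; rw [e0, Function.iterate_zero_apply]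
          exact ih2 hil' (fun h => hjnl (List.mem_cons_of_mem _ h))
        · intro hinl hjl
          have hjl' : j ∈ l := by rcases List.mem_cons.1 hjl with h|h; exact absurd h.symm haj; exact h
          rw [List.foldr_cons]; rw [e0, Function.iterate_zero_apply]
          exact ih3 (fun h => hinl (List.mem_cons_of_mem _ h)) hjl'
        · intro hinl hjnl
          rw [List.foldr_cons]; rw [e0, Function.iterate_zero_apply]
          exact ih4 (fun h => hinl (List.mem_cons_of_mem _ h))
            (fun h => hjnl (List.mem_cons_of_mem _ h))

lemma mderiv'_pair {n : ℕ} (i j : Fin n) (hij : i ≠ j) (g : (Fin n → ℝ) → ℝ) :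
    mderiv' (fun k => if k = i then 1 else if k = j then 1 else 0) g = pderiv' i (pderiv' j g) ∨
    mderiv' (fun k => if k = i then 1 else if k = j then 1 else 0) g = pderiv' j (pderiv' i g) :=
  (foldr_pair i j hij g (List.finRange n) (List.nodup_finRange n)).1
    (List.mem_finRange i) (List.mem_finRange j)

lemma contDiff_pderiv' {n : ℕ} (i : Fin n) {f : (Fin n → ℝ) → ℝ} {m : WithTop ℕ∞}
    (hf : ContDiff ℝ (m + 1) f) : ContDiff ℝ m (pderiv' i f) :=
  (hf.fderiv_right le_rfl).clm_apply contDiff_const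

lemma pderiv'_comm {n : ℕ} (i j : Fin n) {f : (Fin n → ℝ) → ℝ}
    (hf : ContDiff ℝ 2 f) : pderiv' i (pderiv' j f) = pderiv' j (pderiv' i f) := by
  funext x
  have hdf : ∀ y, HasFDerivAt f (fderiv ℝ f y) y := fun y =>
    (hf.differentiable (by norm_num) y).hasFDerivAt
  have hdf' : HasFDerivAt (fderiv ℝ f) (fderiv ℝ (fderiv ℝ f) x) x :=
    ((hf.fderiv_right (m := 1) le_rfl).differentiable (by norm_num) x).hasFDerivAt
  have key : ∀ a b : Fin n, pderiv' a (pderiv' b f) x =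
      fderiv ℝ (fderiv ℝ f) x (Pi.single a 1) (Pi.single b 1) := by
    intro a b
    have h1 : HasFDerivAt (fun y => fderiv ℝ f y (Pi.single b 1))
        ((fderiv ℝ f x).comp (0 : (Fin n → ℝ) →L[ℝ] (Fin n → ℝ)) +
          (fderiv ℝ (fderiv ℝ f) x).flip (Pi.single b 1)) x :=
      hdf'.clm_apply (hasFDerivAt_const _ _)
    show fderiv ℝ (fun y => fderiv ℝ f y (Pi.single b 1)) x (Pi.single a 1) = _
    rw [h1.fderiv]
    simp
  rw [key i j, key j i,
    second_derivative_symmetric hdf hdf' (Pi.single j 1) (Pi.single i 1)]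

lemma clm_eq_sum {n : ℕ} (L : (Fin n → ℝ) →L[ℝ] ℝ) (v : Fin n → ℝ) :
    L v = ∑ j, v j * L (Pi.single j 1) := by
  have hv : v = ∑ j, v j • (Pi.single j (1:ℝ) : Fin n → ℝ) := by
    funext k
    simp [Finset.sum_apply, Pi.single_apply]
  conv_lhs => rw [hv]
  rw [map_sum]
  exact Finset.sum_congr rfl fun j _ => by rw [L.map_smul]; rfl

lemma opnorm_le_sum_abs {n : ℕ} (L : (Fin n → ℝ) →L[ℝ] ℝ) :
    ‖L‖ ≤ ∑ j, |L (Pi.single j 1)| := by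
  apply ContinuousLinearMap.opNorm_le_bound _ (Finset.sum_nonneg fun _ _ => abs_nonneg _)
  intro v
  calc ‖L v‖ = |∑ j, v j * L (Pi.single j 1)| := by rw [← clm_eq_sum]; exact Real.norm_eq_abs _
    _ ≤ ∑ j, |v j * L (Pi.single j 1)| := Finset.abs_sum_le_sum_abs _ _
    _ ≤ ∑ j, ‖v‖ * |L (Pi.single j 1)| := by
        refine Finset.sum_le_sum fun j _ => ?_
        rw [abs_mul]
        exact mul_le_mul_of_nonneg_right (norm_le_pi_norm v j) (abs_nonneg _)
    _ = (∑ j, |L (Pi.single j 1)|) * ‖v‖ := by rw [← Finset.mul_sum, mul_comm]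

lemma taylor_bound {n : ℕ} {s : Set (Fin n → ℝ)} (hs : Convex ℝ s)
    {f : (Fin n → ℝ) → ℝ} (hf : Differentiable ℝ f) {L : ℝ}
    (hL : ∀ y ∈ s, ∀ z ∈ s, ‖fderiv ℝ f y - fderiv ℝ f z‖ ≤ L * ‖y - z‖)
    {a b : Fin n → ℝ} (ha : a ∈ s) (hb : b ∈ s) :
    |f a - f b - fderiv ℝ f b (a - b)| ≤ L * ‖a - b‖ ^ 2 := by
  rcases eq_or_ne a b with rfl | hab
  · simp
  have hab' : 0 < ‖a - b‖ := by
    rw [norm_pos_iff]; exact sub_ne_zero_of_ne hab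
  have hL0 : 0 ≤ L := by
    have := hL a ha b hb
    nlinarith [norm_nonneg (fderiv ℝ f a - fderiv ℝ f b)]
  set h : (Fin n → ℝ) → ℝ := fun y => f y - fderiv ℝ f b y with hh
  have hdiff : ∀ y, DifferentiableAt ℝ h y := fun y =>
    (hf y).sub ((fderiv ℝ f b).differentiable.differentiableAt)
  have hfd : ∀ y, fderiv ℝ h y = fderiv ℝ f y - fderiv ℝ f b := by
    intro y
    rw [hh]
    rw [fderiv_fun_sub (hf y) ((fderiv ℝ f b).differentiable.differentiableAt),
      (fderiv ℝ f b).fderiv]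
  have hseg : segment ℝ b a ⊆ s := hs.segment_subset hb ha
  have hsegnorm : ∀ y ∈ segment ℝ b a, ‖y - b‖ ≤ ‖a - b‖ := by
    intro y hy
    rw [segment_eq_image'] at hy
    obtain ⟨θ, hθ, rfl⟩ := hy
    rw [add_sub_cancel_left, norm_smul, Real.norm_eq_abs, abs_of_nonneg hθ.1]
    nlinarith [norm_nonneg (a - b), hθ.2]
  have key := (convex_segment b a).norm_image_sub_le_of_norm_fderiv_le
      (fun y _ => hdiff y)
      (fun y hy => by
        rw [hfd]
        exact (hL y (hseg hy) b hb).trans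
          (mul_le_mul_of_nonneg_left (hsegnorm y hy) hL0))
      (left_mem_segment ℝ b a) (right_mem_segment ℝ b a)
  have hval : h a - h b = f a - f b - fderiv ℝ f b (a - b) := by
    rw [hh]
    simp only [map_sub]
    ring
  rw [hval] at key
  calc |f a - f b - fderiv ℝ f b (a - b)| ≤ L * ‖a - b‖ * ‖a - b‖ := key
    _ = L * ‖a - b‖ ^ 2 := by ring

end Helpers


set_option maxHeartbeats 2000000 in
/-- In the random flow setup, for all `t ∈ (0, t*]`, `x ∈ K` and
`i ∈ {1,…,n}`, the pathwise derivatives `D_iY^x(t,ω)` exist and the partial derivative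
`∂_i T_t g(x)` exists with `∂_i T_t g(x) = E[∇g(Y^x(t,·))·D_iY^x(t,·)]`. -/
theorem stmt9 {n : ℕ} (hn : 1 ≤ n) (t₀ : ℝ) (ht₀ : 0 < t₀)
    (K M : Set (Fin n → ℝ)) (hMconv : Convex ℝ M)
    (V : (Fin n → ℝ) → Fin n → ℝ) (hV : ContDiff ℝ 3 V)
    (hVbdd : ∀ j : ℕ, j ≤ 3 → ∀ β : Fin n → ℕ, (∑ i, β i) = j → ∀ k : Fin n,
      BddAbove ((fun x => |mderiv' β (fun z => V z k) x|) '' M))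
    {Ω : Type*} [MeasurableSpace Ω] (P : Measure Ω) [IsProbabilityMeasure P]
    (X : ℝ → Ω → Fin n → ℝ) (hX0 : ∀ ω, X 0 ω = 0)
    (Y : (Fin n → ℝ) → ℝ → Ω → Fin n → ℝ)
    (hYint : ∀ x ∈ ⋃ y ∈ K, Metric.ball y (3:ℝ), ∀ t ∈ Set.Icc (0:ℝ) t₀, ∀ ω : Ω,
      IntervalIntegrable (fun s => V (Y x s ω)) volume 0 t)
    (hY : ∀ x ∈ ⋃ y ∈ K, Metric.ball y (3:ℝ), ∀ t ∈ Set.Icc (0:ℝ) t₀, ∀ ω : Ω,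
      Y x t ω = x + X t ω + ∫ s in (0:ℝ)..t, V (Y x s ω))
    (hYM : ∀ x ∈ ⋃ y ∈ K, Metric.ball y (3:ℝ), ∀ t ∈ Set.Icc (0:ℝ) t₀, ∀ ω : Ω,
      Y x t ω ∈ M)
    (hYmeas : ∀ x : Fin n → ℝ, ∀ t : ℝ, Measurable (fun ω => Y x t ω))
    (g : (Fin n → ℝ) → ℝ) (hg : ContDiff ℝ 2 g)
    (hgbdd : ∃ C : ℝ, ∀ x : Fin n → ℝ,
      |g x| ≤ C ∧ ‖fderiv ℝ g x‖ ≤ C ∧ ‖fderiv ℝ (fderiv ℝ g) x‖ ≤ C)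
    (hTsupp : ∀ t : ℝ, 0 ≤ t → t ≤ t₀ → ∀ x : Fin n → ℝ, x ∉ K →
      (∫ ω, g (Y x t ω) ∂P) = 0) :
    ∀ t ∈ Set.Ioc (0:ℝ) (tstar V M t₀), ∀ x ∈ K, ∀ i : Fin n,
      ∃ DY : Ω → Fin n → ℝ,
        (∀ ω : Ω, Filter.Tendsto
          (fun u : ℝ => u⁻¹ • (Y (x + u • (Pi.single i 1 : Fin n → ℝ)) t ω - Y x t ω))
          (𝓝[≠] (0:ℝ)) (𝓝 (DY ω))) ∧
        HasDerivAt (fun u : ℝ => ∫ ω, g (Y (x + u • (Pi.single i 1 : Fin n → ℝ)) t ω) ∂P)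
          (∫ ω, fderiv ℝ g (Y x t ω) (DY ω) ∂P) 0 := by
  classical
  intro t ht x hxK i
  obtain ⟨Cg, hCg⟩ := hgbdd
  have hCg0 : 0 ≤ Cg := le_trans (abs_nonneg _) (hCg 0).1
  set e : Fin n → ℝ := Pi.single i 1 with he
  have hnorme : ‖e‖ = 1 := by rw [he, Pi.norm_single, norm_one]
  set K3 := ⋃ y ∈ K, Metric.ball y (3:ℝ) with hK3
  have hxK3 : x ∈ K3 := Set.mem_iUnion₂.2 ⟨x, hxK, Metric.mem_ball_self (by norm_num)⟩
  have hxuK3 : ∀ u : ℝ, |u| ≤ 1 → x + u • e ∈ K3 := by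
    intro u hu
    refine Set.mem_iUnion₂.2 ⟨x, hxK, ?_⟩
    rw [Metric.mem_ball, dist_eq_norm, add_sub_cancel_left, norm_smul, hnorme, mul_one,
      Real.norm_eq_abs]
    exact lt_of_le_of_lt hu (by norm_num)
  -- time bounds
  have htstar : tstar V M t₀ ≤ t₀ := by
    unfold tstar; split
    · exact le_rfl
    · exact min_le_right _ _
  have ht0 : 0 < t := ht.1
  have htt₀ : t ≤ t₀ := le_trans ht.2 htstar
  have hIcc : ∀ s : ℝ, s ∈ Set.Icc 0 t → s ∈ Set.Icc (0:ℝ) t₀ :=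
    fun s hs => ⟨hs.1, le_trans hs.2 htt₀⟩
  have htmem : t ∈ Set.Icc (0:ℝ) t₀ := ⟨le_of_lt ht0, htt₀⟩
  -- Ω nonempty, M nonempty
  have hΩ : Nonempty Ω := by
    rcases isEmpty_or_nonempty Ω with h | h
    · exfalso
      haveI := h
      have h0 : P Set.univ = 0 := by
        rw [Set.eq_empty_of_isEmpty (Set.univ : Set Ω), measure_empty]
      rw [measure_univ] at h0
      exact one_ne_zero h0
    · exact h
  have hMne : M.Nonempty := ⟨Y x t (Classical.arbitrary Ω), hYM x hxK3 t htmem _⟩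
  -- coordinate functions of V
  have hVk : ∀ k : Fin n, ContDiff ℝ 3 (fun z => V z k) := fun k => (contDiff_pi.1 hV) k
  have hVkdiff : ∀ k, Differentiable ℝ (fun z => V z k) := fun k =>
    (hVk k).differentiable (by norm_num)
  have hproj : ∀ (k : Fin n) (y w : Fin n → ℝ),
      fderiv ℝ (fun z => V z k) y w = (fderiv ℝ V y) w k := by
    intro k y w
    have h1 : HasFDerivAt (fun z => V z k)
        ((ContinuousLinearMap.proj k : (Fin n → ℝ) →L[ℝ] ℝ).comp (fderiv ℝ V y)) y := by
      exact (ContinuousLinearMap.proj k).hasFDerivAt.comp y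
        ((hV.differentiable (by norm_num) y).hasFDerivAt)
    rw [h1.fderiv]; rfl
  -- first order sups
  set s1 : Fin n → Fin n → ℝ := fun j k =>
    sSup ((fun y => |pderiv' j (fun z => V z k) y|) '' M) with hs1def
  have hbdd1 : ∀ j k, BddAbove ((fun y => |pderiv' j (fun z => V z k) y|) '' M) := by
    intro j k
    have := hVbdd 1 (by norm_num) (fun l => if l = j then 1 else 0)
      (by simp [Finset.sum_ite_eq']) k
    rwa [mderiv'_single] at this
  have hle1 : ∀ j k, ∀ y ∈ M, |pderiv' j (fun z => V z k) y| ≤ s1 j k :=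
    fun j k y hy => le_csSup (hbdd1 j k) ⟨y, hy, rfl⟩
  have h1nn : ∀ j k, 0 ≤ s1 j k := by
    intro j k
    obtain ⟨y, hy⟩ := hMne
    exact le_trans (abs_nonneg _) (hle1 j k y hy)
  set N := DjNorm 1 V M with hNdef
  have hNblock : (∀ k, (∑ j, s1 j k) ≤ N) ∧ 0 ≤ N := by
    set S := Finset.univ.filter (fun β : Fin n → Fin 2 => ∑ l, (β l : ℕ) = 1) with hSdef
    set term : (Fin n → Fin 2) → Fin n → ℝ := fun β k =>
      sSup ((fun y => |mderiv' (fun l => (β l : ℕ)) (fun z => V z k) y|) '' M) with htermdef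
    have htermnn : ∀ β ∈ S, ∀ k : Fin n, 0 ≤ term β k := by
      intro β hβ k
      have hb : BddAbove ((fun y => |mderiv' (fun l => (β l : ℕ)) (fun z => V z k) y|) '' M) :=
        hVbdd 1 (by norm_num) _ (Finset.mem_filter.1 hβ).2 k
      obtain ⟨y0, hy0⟩ := hMne
      exact le_trans (abs_nonneg _) (le_csSup hb ⟨y0, hy0, rfl⟩)
    have hNeq : N = ∑ β ∈ S, ∑ k, term β k := rfl
    set σ : Fin n → (Fin n → Fin 2) := fun j l => if l = j then 1 else 0 with hσdef
    have hcast : ∀ j l, ((σ j l : Fin 2) : ℕ) = if l = j then 1 else 0 := by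
      intro j l; by_cases h : l = j <;> simp [hσdef, h]
    have hσS : ∀ j, σ j ∈ S := by
      intro j
      refine Finset.mem_filter.2 ⟨Finset.mem_univ _, ?_⟩
      rw [Finset.sum_congr rfl (fun l _ => hcast j l)]
      simp
    have hterm_eq : ∀ j k, term (σ j) k = s1 j k := by
      intro j k
      have h2 : (fun y => |mderiv' (fun l => ((σ j l : Fin 2) : ℕ)) (fun z => V z k) y|)
          = fun y => |pderiv' j (fun z => V z k) y| := by
        rw [show (fun l => ((σ j l : Fin 2) : ℕ)) = (fun l => if l = j then 1 else 0)
          from funext (hcast j), mderiv'_single]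
      show sSup (_ '' M) = _
      rw [h2]
    constructor
    · intro k
      calc (∑ j, s1 j k) = ∑ j, term (σ j) k :=
            Finset.sum_congr rfl fun j _ => (hterm_eq j k).symm
        _ ≤ ∑ j, ∑ k', term (σ j) k' := by
            refine Finset.sum_le_sum fun j _ => ?_
            exact Finset.single_le_sum (fun k' _ => htermnn (σ j) (hσS j) k')
              (Finset.mem_univ k)
        _ = ∑ β ∈ Finset.univ.image σ, ∑ k', term β k' := by
            rw [Finset.sum_image]
            intro a _ b _ hab
            by_contra hne
            have h : (if a = a then (1 : Fin 2) else 0) = (if a = b then 1 else 0) :=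
              congrFun hab a
            rw [if_pos rfl, if_neg hne] at h
            exact absurd h (by decide)
        _ ≤ ∑ β ∈ S, ∑ k', term β k' := by
            refine Finset.sum_le_sum_of_subset_of_nonneg ?_ ?_
            · intro β hβ
              obtain ⟨j, _, rfl⟩ := Finset.mem_image.1 hβ
              exact hσS j
            · intro β hβ _
              exact Finset.sum_nonneg fun k' _ => htermnn β hβ k'
        _ = N := hNeq.symm
    · rw [hNeq]
      exact Finset.sum_nonneg fun β hβ => Finset.sum_nonneg fun k _ => htermnn β hβ k
  obtain ⟨hNkey, hN0⟩ := hNblock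
  have htN : t * N ≤ 1 / 2 := by
    by_cases hN : N = 0
    · rw [hN, mul_zero]; norm_num
    · have hNpos : 0 < N := lt_of_le_of_ne hN0 (Ne.symm hN)
      have ht2 := ht.2
      unfold tstar at ht2
      rw [← hNdef] at ht2
      rw [if_neg hN] at ht2
      have h3 : t ≤ 1 / (2 * N) := le_trans ht2 (min_le_left _ _)
      rw [le_div_iff₀ (by positivity)] at h3
      linarith
  -- first-order derivative bounds
  have hfdVk : ∀ k, ∀ y ∈ M, ‖fderiv ℝ (fun z => V z k) y‖ ≤ ∑ j, s1 j k := by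
    intro k y hy
    refine (opnorm_le_sum_abs _).trans (Finset.sum_le_sum fun j _ => ?_)
    exact hle1 j k y hy
  have hLipV : ∀ a ∈ M, ∀ b ∈ M, ‖V a - V b‖ ≤ N * ‖a - b‖ := by
    intro a ha b hb
    rw [pi_norm_le_iff_of_nonneg (by positivity)]
    intro k
    have h1 : ‖(fun z => V z k) a - (fun z => V z k) b‖ ≤ (∑ j, s1 j k) * ‖a - b‖ :=
      hMconv.norm_image_sub_le_of_norm_fderiv_le
        (fun y _ => (hVkdiff k).differentiableAt) (hfdVk k) hb ha
    calc ‖(V a - V b) k‖ = ‖(fun z => V z k) a - (fun z => V z k) b‖ := rfl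
      _ ≤ (∑ j, s1 j k) * ‖a - b‖ := h1
      _ ≤ N * ‖a - b‖ := mul_le_mul_of_nonneg_right (hNkey k) (norm_nonneg _)
  have hAop : ∀ y ∈ M, ∀ w, ‖fderiv ℝ V y w‖ ≤ N * ‖w‖ := by
    intro y hy w
    rw [pi_norm_le_iff_of_nonneg (by positivity)]
    intro k
    calc ‖fderiv ℝ V y w k‖ = ‖fderiv ℝ (fun z => V z k) y w‖ := by rw [hproj]
      _ ≤ ‖fderiv ℝ (fun z => V z k) y‖ * ‖w‖ := (fderiv ℝ (fun z => V z k) y).le_opNorm w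
      _ ≤ (∑ j, s1 j k) * ‖w‖ := mul_le_mul_of_nonneg_right (hfdVk k y hy) (norm_nonneg _)
      _ ≤ N * ‖w‖ := mul_le_mul_of_nonneg_right (hNkey k) (norm_nonneg _)
  -- zeroth order bound
  set s0 : Fin n → ℝ := fun k => sSup ((fun y => |V y k|) '' M) with hs0def
  have hbdd0 : ∀ k, BddAbove ((fun y => |V y k|) '' M) := by
    intro k
    have := hVbdd 0 (by norm_num) (fun _ => 0) (by simp) k
    rwa [mderiv'_zero] at this
  have hle0 : ∀ k, ∀ y ∈ M, |V y k| ≤ s0 k := fun k y hy => le_csSup (hbdd0 k) ⟨y, hy, rfl⟩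
  have h0nn : ∀ k, 0 ≤ s0 k := by
    intro k
    obtain ⟨y, hy⟩ := hMne
    exact le_trans (abs_nonneg _) (hle0 k y hy)
  set C0 : ℝ := ∑ k, s0 k with hC0def
  have hC00 : 0 ≤ C0 := Finset.sum_nonneg fun k _ => h0nn k
  have hVbound : ∀ y ∈ M, ‖V y‖ ≤ C0 := by
    intro y hy
    rw [pi_norm_le_iff_of_nonneg hC00]
    intro k
    exact le_trans (hle0 k y hy) (Finset.single_le_sum (fun k' _ => h0nn k') (Finset.mem_univ k))
  -- second order sups
  set c2 : Fin n → Fin n → Fin n → ℝ := fun j j' k =>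
    sSup ((fun y => |pderiv' j (pderiv' j' (fun z => V z k)) y|) '' M) with hc2def
  have hbdd2 : ∀ j j' k, BddAbove
      ((fun y => |pderiv' j (pderiv' j' (fun z => V z k)) y|) '' M) := by
    intro j j' k
    rcases eq_or_ne j j' with rfl | hjj'
    · have := hVbdd 2 (by norm_num) (fun l => if l = j then 2 else 0)
        (by simp) k
      rwa [mderiv'_double] at this
    · have hsum : (∑ l, (if l = j' then 1 else if l = j then 1 else 0)) = 2 := by
        have hpt : ∀ l ∈ Finset.univ, (if l = j' then 1 else if l = j then 1 else 0)
            = (if l = j' then 1 else 0) + (if l = j then 1 else 0) := by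
          intro l _
          by_cases h1 : l = j'
          · rw [if_pos h1, if_pos h1, if_neg (by rw [h1]; exact fun h => hjj' h.symm), add_zero]
          · rw [if_neg h1, if_neg h1, zero_add]
        rw [Finset.sum_congr rfl hpt, Finset.sum_add_distrib]
        simp
      have hb := hVbdd 2 (by norm_num) (fun l => if l = j' then 1 else if l = j then 1 else 0)
        hsum k
      have hcomm : pderiv' j' (pderiv' j (fun z => V z k))
          = pderiv' j (pderiv' j' (fun z => V z k)) :=
        pderiv'_comm j' j ((hVk k).of_le (by norm_num))
      rcases mderiv'_pair j' j (Ne.symm hjj') (fun z => V z k) with h | h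
      · rw [h, hcomm] at hb; exact hb
      · rw [h] at hb; exact hb
  have hle2 : ∀ j j' k, ∀ y ∈ M, |pderiv' j (pderiv' j' (fun z => V z k)) y| ≤ c2 j j' k :=
    fun j j' k y hy => le_csSup (hbdd2 j j' k) ⟨y, hy, rfl⟩
  have h2nn : ∀ j j' k, 0 ≤ c2 j j' k := by
    intro j j' k
    obtain ⟨y, hy⟩ := hMne
    exact le_trans (abs_nonneg _) (hle2 j j' k y hy)
  have hpVkC2 : ∀ j' k, ContDiff ℝ 2 (pderiv' j' (fun z => V z k)) := by
    intro j' k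
    exact contDiff_pderiv' j' (by exact_mod_cast hVk k)
  -- Lipschitz bound for fderiv of coordinates
  have hfdLip : ∀ k, ∀ a ∈ M, ∀ b ∈ M,
      ‖fderiv ℝ (fun z => V z k) a - fderiv ℝ (fun z => V z k) b‖
        ≤ (∑ j', ∑ j, c2 j j' k) * ‖a - b‖ := by
    intro k a ha b hb
    refine (opnorm_le_sum_abs _).trans ?_
    have hstep : ∀ j', |(fderiv ℝ (fun z => V z k) a - fderiv ℝ (fun z => V z k) b)
        (Pi.single j' 1)| ≤ (∑ j, c2 j j' k) * ‖a - b‖ := by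
      intro j'
      have h1 : |pderiv' j' (fun z => V z k) a - pderiv' j' (fun z => V z k) b|
          ≤ (∑ j, c2 j j' k) * ‖a - b‖ := by
        refine hMconv.norm_image_sub_le_of_norm_fderiv_le
          (fun y _ => ((hpVkC2 j' k).differentiable (by norm_num)).differentiableAt)
          (fun y hy => ?_) hb ha
        refine (opnorm_le_sum_abs _).trans (Finset.sum_le_sum fun j _ => ?_)
        exact hle2 j j' k y hy
      exact h1
    calc (∑ j', |(fderiv ℝ (fun z => V z k) a - fderiv ℝ (fun z => V z k) b) (Pi.single j' 1)|)
        ≤ ∑ j', (∑ j, c2 j j' k) * ‖a - b‖ := Finset.sum_le_sum fun j' _ => hstep j'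
      _ = (∑ j', ∑ j, c2 j j' k) * ‖a - b‖ := by rw [Finset.sum_mul]
  set C2 : ℝ := ∑ k, ∑ j', ∑ j, c2 j j' k with hC2def
  have hC20 : 0 ≤ C2 := Finset.sum_nonneg fun k _ => Finset.sum_nonneg fun j' _ => Finset.sum_nonneg fun j _ => h2nn j j' k
  have hTayV : ∀ a ∈ M, ∀ b ∈ M,
      ‖V a - V b - fderiv ℝ V b (a - b)‖ ≤ C2 * ‖a - b‖ ^ 2 := by
    intro a ha b hb
    rw [pi_norm_le_iff_of_nonneg (by positivity)]
    intro k
    have hcoord : (V a - V b - fderiv ℝ V b (a - b)) k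
        = (fun z => V z k) a - (fun z => V z k) b - fderiv ℝ (fun z => V z k) b (a - b) := by
      simp [hproj]
    rw [Real.norm_eq_abs, hcoord]
    have h1 : |(fun z => V z k) a - (fun z => V z k) b - fderiv ℝ (fun z => V z k) b (a - b)|
        ≤ (∑ j', ∑ j, c2 j j' k) * ‖a - b‖ ^ 2 :=
      taylor_bound hMconv (hVkdiff k) (hfdLip k) ha hb
    refine le_trans h1 (mul_le_mul_of_nonneg_right ?_ (by positivity))
    exact Finset.single_le_sum
      (fun k' _ => Finset.sum_nonneg fun j' _ => Finset.sum_nonneg fun j _ => h2nn j j' k')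
      (Finset.mem_univ k)
  -- bounds for g
  have hgdiff : Differentiable ℝ g := hg.differentiable (by norm_num)
  have hgfdiff : Differentiable ℝ (fderiv ℝ g) :=
    (hg.fderiv_right (m := 1) (by norm_num)).differentiable (by norm_num)
  have hgLip : ∀ y z : Fin n → ℝ, ‖fderiv ℝ g y - fderiv ℝ g z‖ ≤ Cg * ‖y - z‖ := by
    intro y z
    exact convex_univ.norm_image_sub_le_of_norm_fderiv_le
      (fun w _ => hgfdiff.differentiableAt) (fun w _ => (hCg w).2.2)
      (Set.mem_univ z) (Set.mem_univ y)
  have hgTay : ∀ a b : Fin n → ℝ, |g a - g b - fderiv ℝ g b (a - b)| ≤ Cg * ‖a - b‖ ^ 2 :=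
    fun a b => taylor_bound convex_univ hgdiff (fun y _ z _ => hgLip y z)
      (Set.mem_univ a) (Set.mem_univ b)
  -- flow facts
  have hYeq : ∀ u : ℝ, |u| ≤ 1 → ∀ s ∈ Set.Icc (0:ℝ) t, ∀ ω : Ω,
      Y (x + u • e) s ω - Y x s ω
        = u • e + ∫ r in (0:ℝ)..s, (V (Y (x + u • e) r ω) - V (Y x r ω)) := by
    intro u hu s hs ω
    have hs' := hIcc s hs
    rw [hY (x + u • e) (hxuK3 u hu) s hs' ω, hY x hxK3 s hs' ω,
      intervalIntegral.integral_sub (hYint (x + u • e) (hxuK3 u hu) s hs' ω)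
        (hYint x hxK3 s hs' ω)]
    abel
  have hYM' : ∀ u : ℝ, |u| ≤ 1 → ∀ s ∈ Set.Icc (0:ℝ) t, ∀ ω : Ω, Y (x + u • e) s ω ∈ M :=
    fun u hu s hs ω => hYM _ (hxuK3 u hu) s (hIcc s hs) ω
  have hYMx : ∀ s ∈ Set.Icc (0:ℝ) t, ∀ ω : Ω, Y x s ω ∈ M :=
    fun s hs ω => hYM x hxK3 s (hIcc s hs) ω
  have hIoc_sub : ∀ s ∈ Set.Icc (0:ℝ) t, ∀ r ∈ Set.uIoc (0:ℝ) s, r ∈ Set.Icc (0:ℝ) t := by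
    intro s hs r hr
    rw [Set.uIoc_of_le hs.1] at hr
    exact ⟨le_of_lt hr.1, le_trans hr.2 hs.2⟩
  -- a priori bound on Z
  have hZbdd : ∀ u : ℝ, |u| ≤ 1 → ∀ ω : Ω, ∀ s ∈ Set.Icc (0:ℝ) t,
      ‖Y (x + u • e) s ω - Y x s ω‖ ≤ 2 * |u| := by
    intro u hu ω
    have himg : ((fun s => ‖Y (x + u • e) s ω - Y x s ω‖) '' Set.Icc 0 t).Nonempty :=
      ⟨_, ⟨0, ⟨le_rfl, le_of_lt ht0⟩, rfl⟩⟩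
    have hbddA : BddAbove ((fun s => ‖Y (x + u • e) s ω - Y x s ω‖) '' Set.Icc 0 t) := by
      refine ⟨|u| + 2 * C0 * t, ?_⟩
      rintro _ ⟨s, hs, rfl⟩
      show ‖Y (x + u • e) s ω - Y x s ω‖ ≤ |u| + 2 * C0 * t
      rw [hYeq u hu s hs ω]
      refine le_trans (norm_add_le _ _) ?_
      have h1 : ‖u • e‖ = |u| := by rw [norm_smul, hnorme, mul_one, Real.norm_eq_abs]
      have h2 : ‖∫ r in (0:ℝ)..s, (V (Y (x + u • e) r ω) - V (Y x r ω))‖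
          ≤ 2 * C0 * |s - 0| := by
        refine intervalIntegral.norm_integral_le_of_norm_le_const ?_
        intro r hr
        have hrI := hIoc_sub s hs r hr
        calc ‖V (Y (x + u • e) r ω) - V (Y x r ω)‖
            ≤ ‖V (Y (x + u • e) r ω)‖ + ‖V (Y x r ω)‖ := norm_sub_le _ _
          _ ≤ C0 + C0 := add_le_add (hVbound _ (hYM' u hu r hrI ω)) (hVbound _ (hYMx r hrI ω))
          _ = 2 * C0 := by ring
      rw [h1]
      refine add_le_add_right (le_trans h2 ?_) _
      rw [sub_zero, abs_of_nonneg hs.1]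
      exact mul_le_mul_of_nonneg_left hs.2 (by positivity)
    set S := sSup ((fun s => ‖Y (x + u • e) s ω - Y x s ω‖) '' Set.Icc 0 t) with hSdef2
    have hmemS : ∀ s ∈ Set.Icc (0:ℝ) t, ‖Y (x + u • e) s ω - Y x s ω‖ ≤ S :=
      fun s hs => le_csSup hbddA ⟨s, hs, rfl⟩
    have hS0 : 0 ≤ S := le_trans (norm_nonneg _) (hmemS 0 ⟨le_rfl, le_of_lt ht0⟩)
    have hSle : S ≤ |u| + (t * N) * S := by
      refine csSup_le himg ?_
      rintro _ ⟨s, hs, rfl⟩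
      show ‖Y (x + u • e) s ω - Y x s ω‖ ≤ |u| + (t * N) * S
      rw [hYeq u hu s hs ω]
      refine le_trans (norm_add_le _ _) ?_
      have h1 : ‖u • e‖ = |u| := by rw [norm_smul, hnorme, mul_one, Real.norm_eq_abs]
      have h2 : ‖∫ r in (0:ℝ)..s, (V (Y (x + u • e) r ω) - V (Y x r ω))‖
          ≤ (N * S) * |s - 0| := by
        refine intervalIntegral.norm_integral_le_of_norm_le_const ?_
        intro r hr
        have hrI := hIoc_sub s hs r hr
        calc ‖V (Y (x + u • e) r ω) - V (Y x r ω)‖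
            ≤ N * ‖Y (x + u • e) r ω - Y x r ω‖ :=
              hLipV _ (hYM' u hu r hrI ω) _ (hYMx r hrI ω)
          _ ≤ N * S := mul_le_mul_of_nonneg_left (hmemS r hrI) hN0
      rw [h1]
      refine add_le_add_right (le_trans h2 ?_) _
      rw [sub_zero, abs_of_nonneg hs.1]
      calc (N * S) * s ≤ (N * S) * t := mul_le_mul_of_nonneg_left hs.2 (by positivity)
        _ = (t * N) * S := by ring
    have hS2 : S ≤ 2 * |u| := by
      nlinarith [mul_le_mul_of_nonneg_right htN hS0]
    intro s hs
    exact le_trans (hmemS s hs) hS2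
  -- constant for the Cauchy estimate
  set Cc : ℝ := 8 * C2 * t with hCcdef
  have hCc0 : 0 ≤ Cc := by
    rw [hCcdef]
    exact mul_nonneg (mul_nonneg (by norm_num) hC20) (le_of_lt ht0)
  -- Taylor remainder along the flow
  have hTayR : ∀ u : ℝ, |u| ≤ 1 → ∀ ω : Ω, ∀ r ∈ Set.Icc (0:ℝ) t,
      ‖V (Y (x + u • e) r ω) - V (Y x r ω)
        - fderiv ℝ V (Y x r ω) (Y (x + u • e) r ω - Y x r ω)‖ ≤ 4 * C2 * u ^ 2 := by
    intro u hu ω r hr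
    have h1 := hTayV _ (hYM' u hu r hr ω) _ (hYMx r hr ω)
    refine le_trans h1 ?_
    have h2 : ‖Y (x + u • e) r ω - Y x r ω‖ ^ 2 ≤ (2 * |u|) ^ 2 := by
      have h3 := hZbdd u hu ω r hr
      nlinarith [norm_nonneg (Y (x + u • e) r ω - Y x r ω)]
    calc C2 * ‖Y (x + u • e) r ω - Y x r ω‖ ^ 2 ≤ C2 * (2 * |u|) ^ 2 :=
          mul_le_mul_of_nonneg_left h2 hC20
      _ = 4 * C2 * u ^ 2 := by rw [mul_pow, sq_abs]; ring
  -- the key Cauchy-type estimate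
  have hCauchy : ∀ u v : ℝ, u ≠ 0 → v ≠ 0 → |u| ≤ 1 → |v| ≤ 1 → ∀ ω : Ω,
      ‖u⁻¹ • (Y (x + u • e) t ω - Y x t ω) - v⁻¹ • (Y (x + v • e) t ω - Y x t ω)‖
        ≤ Cc * (|u| + |v|) := by
    intro u v hu hv hu1 hv1 ω
    set D : ℝ → Fin n → ℝ := fun s =>
      u⁻¹ • (Y (x + u • e) s ω - Y x s ω) - v⁻¹ • (Y (x + v • e) s ω - Y x s ω) with hDdef
    have hDeq : ∀ s ∈ Set.Icc (0:ℝ) t, D s = ∫ r in (0:ℝ)..s,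
        (u⁻¹ • (V (Y (x + u • e) r ω) - V (Y x r ω))
          - v⁻¹ • (V (Y (x + v • e) r ω) - V (Y x r ω))) := by
      intro s hs
      have hintu : IntervalIntegrable
          (fun r => u⁻¹ • (V (Y (x + u • e) r ω) - V (Y x r ω))) volume 0 s :=
        ((hYint _ (hxuK3 u hu1) s (hIcc s hs) ω).sub (hYint x hxK3 s (hIcc s hs) ω)).smul u⁻¹
      have hintv : IntervalIntegrable
          (fun r => v⁻¹ • (V (Y (x + v • e) r ω) - V (Y x r ω))) volume 0 s :=
        ((hYint _ (hxuK3 v hv1) s (hIcc s hs) ω).sub (hYint x hxK3 s (hIcc s hs) ω)).smul v⁻¹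
      have h1 : (∫ r in (0:ℝ)..s, (V (Y (x + u • e) r ω) - V (Y x r ω)))
          = (Y (x + u • e) s ω - Y x s ω) - u • e := by
        rw [hYeq u hu1 s hs ω]; abel
      have h2 : (∫ r in (0:ℝ)..s, (V (Y (x + v • e) r ω) - V (Y x r ω)))
          = (Y (x + v • e) s ω - Y x s ω) - v • e := by
        rw [hYeq v hv1 s hs ω]; abel
      rw [intervalIntegral.integral_sub hintu hintv, intervalIntegral.integral_smul,
        intervalIntegral.integral_smul, h1, h2]
      simp only [hDdef]
      match_scalars <;> field_simp <;> ring
    have hDb4 : ∀ s ∈ Set.Icc (0:ℝ) t, ‖D s‖ ≤ 4 := by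
      intro s hs
      have hbu : ‖u⁻¹ • (Y (x + u • e) s ω - Y x s ω)‖ ≤ 2 := by
        rw [norm_smul, Real.norm_eq_abs, abs_inv]
        have h3 := hZbdd u hu1 ω s hs
        have hu0 : 0 < |u| := abs_pos.2 hu
        rw [inv_mul_le_iff₀ hu0]
        linarith
      have hbv : ‖v⁻¹ • (Y (x + v • e) s ω - Y x s ω)‖ ≤ 2 := by
        rw [norm_smul, Real.norm_eq_abs, abs_inv]
        have h3 := hZbdd v hv1 ω s hs
        have hv0 : 0 < |v| := abs_pos.2 hv
        rw [inv_mul_le_iff₀ hv0]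
        linarith
      calc ‖D s‖ ≤ ‖u⁻¹ • (Y (x + u • e) s ω - Y x s ω)‖
            + ‖v⁻¹ • (Y (x + v • e) s ω - Y x s ω)‖ := norm_sub_le _ _
        _ ≤ 4 := by linarith
    have himgD : ((fun s => ‖D s‖) '' Set.Icc 0 t).Nonempty :=
      ⟨_, ⟨0, ⟨le_rfl, le_of_lt ht0⟩, rfl⟩⟩
    have hbddD : BddAbove ((fun s => ‖D s‖) '' Set.Icc 0 t) := by
      refine ⟨4, ?_⟩
      rintro _ ⟨s, hs, rfl⟩
      exact hDb4 s hs
    set SD := sSup ((fun s => ‖D s‖) '' Set.Icc 0 t) with hSDdef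
    have hmemD : ∀ s ∈ Set.Icc (0:ℝ) t, ‖D s‖ ≤ SD :=
      fun s hs => le_csSup hbddD ⟨s, hs, rfl⟩
    have hSD0 : 0 ≤ SD := le_trans (norm_nonneg _) (hmemD 0 ⟨le_rfl, le_of_lt ht0⟩)
    have habsu : |u|⁻¹ * (4 * C2 * u ^ 2) = 4 * C2 * |u| := by
      have hu0 : |u| ≠ 0 := fun h => hu (abs_eq_zero.1 h)
      calc |u|⁻¹ * (4 * C2 * u ^ 2) = |u|⁻¹ * |u| * (4 * C2 * |u|) := by
            rw [sq, ← abs_mul_abs_self]; ring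
        _ = 4 * C2 * |u| := by rw [inv_mul_cancel₀ hu0, one_mul]
    have habsv : |v|⁻¹ * (4 * C2 * v ^ 2) = 4 * C2 * |v| := by
      have hv0 : |v| ≠ 0 := fun h => hv (abs_eq_zero.1 h)
      calc |v|⁻¹ * (4 * C2 * v ^ 2) = |v|⁻¹ * |v| * (4 * C2 * |v|) := by
            rw [sq, ← abs_mul_abs_self]; ring
        _ = 4 * C2 * |v| := by rw [inv_mul_cancel₀ hv0, one_mul]
    have hSDle : SD ≤ (N * SD + 4 * C2 * (|u| + |v|)) * t := by
      refine csSup_le himgD ?_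
      rintro _ ⟨s, hs, rfl⟩
      show ‖D s‖ ≤ (N * SD + 4 * C2 * (|u| + |v|)) * t
      rw [hDeq s hs]
      have hbound : ‖∫ r in (0:ℝ)..s,
          (u⁻¹ • (V (Y (x + u • e) r ω) - V (Y x r ω))
            - v⁻¹ • (V (Y (x + v • e) r ω) - V (Y x r ω)))‖
          ≤ (N * SD + 4 * C2 * (|u| + |v|)) * |s - 0| := by
        refine intervalIntegral.norm_integral_le_of_norm_le_const ?_
        intro r hr
        have hrI := hIoc_sub s hs r hr
        have hid : u⁻¹ • (V (Y (x + u • e) r ω) - V (Y x r ω))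
            - v⁻¹ • (V (Y (x + v • e) r ω) - V (Y x r ω))
            = fderiv ℝ V (Y x r ω) (D r)
              + u⁻¹ • (V (Y (x + u • e) r ω) - V (Y x r ω)
                  - fderiv ℝ V (Y x r ω) (Y (x + u • e) r ω - Y x r ω))
              - v⁻¹ • (V (Y (x + v • e) r ω) - V (Y x r ω)
                  - fderiv ℝ V (Y x r ω) (Y (x + v • e) r ω - Y x r ω)) := by
          simp only [hDdef, map_sub, _root_.map_smul, smul_sub]
          module
        rw [hid]
        have hb1 : ‖fderiv ℝ V (Y x r ω) (D r)‖ ≤ N * SD := by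
          refine le_trans (hAop _ (hYMx r hrI ω) _) ?_
          exact mul_le_mul_of_nonneg_left (hmemD r hrI) hN0
        have hb2 : ‖u⁻¹ • (V (Y (x + u • e) r ω) - V (Y x r ω)
            - fderiv ℝ V (Y x r ω) (Y (x + u • e) r ω - Y x r ω))‖ ≤ 4 * C2 * |u| := by
          rw [norm_smul, Real.norm_eq_abs, abs_inv, ← habsu]
          exact mul_le_mul_of_nonneg_left (hTayR u hu1 ω r hrI) (by positivity)
        have hb3 : ‖v⁻¹ • (V (Y (x + v • e) r ω) - V (Y x r ω)
            - fderiv ℝ V (Y x r ω) (Y (x + v • e) r ω - Y x r ω))‖ ≤ 4 * C2 * |v| := by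
          rw [norm_smul, Real.norm_eq_abs, abs_inv, ← habsv]
          exact mul_le_mul_of_nonneg_left (hTayR v hv1 ω r hrI) (by positivity)
        calc ‖fderiv ℝ V (Y x r ω) (D r)
              + u⁻¹ • (V (Y (x + u • e) r ω) - V (Y x r ω)
                  - fderiv ℝ V (Y x r ω) (Y (x + u • e) r ω - Y x r ω))
              - v⁻¹ • (V (Y (x + v • e) r ω) - V (Y x r ω)
                  - fderiv ℝ V (Y x r ω) (Y (x + v • e) r ω - Y x r ω))‖
            ≤ ‖fderiv ℝ V (Y x r ω) (D r)
              + u⁻¹ • (V (Y (x + u • e) r ω) - V (Y x r ω)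
                  - fderiv ℝ V (Y x r ω) (Y (x + u • e) r ω - Y x r ω))‖
              + ‖v⁻¹ • (V (Y (x + v • e) r ω) - V (Y x r ω)
                  - fderiv ℝ V (Y x r ω) (Y (x + v • e) r ω - Y x r ω))‖ := norm_sub_le _ _
          _ ≤ (‖fderiv ℝ V (Y x r ω) (D r)‖
              + ‖u⁻¹ • (V (Y (x + u • e) r ω) - V (Y x r ω)
                  - fderiv ℝ V (Y x r ω) (Y (x + u • e) r ω - Y x r ω))‖)
              + ‖v⁻¹ • (V (Y (x + v • e) r ω) - V (Y x r ω)
                  - fderiv ℝ V (Y x r ω) (Y (x + v • e) r ω - Y x r ω))‖ :=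
            add_le_add_left (norm_add_le _ _) _
          _ ≤ N * SD + 4 * C2 * (|u| + |v|) := by linarith
      refine le_trans hbound ?_
      rw [sub_zero, abs_of_nonneg hs.1]
      exact mul_le_mul_of_nonneg_left hs.2 (by positivity)
    have hSDfin : SD ≤ Cc * (|u| + |v|) := by
      rw [hCcdef]
      nlinarith [mul_le_mul_of_nonneg_right htN hSD0, abs_nonneg u, abs_nonneg v,
        mul_nonneg hC20 (le_of_lt ht0), hC20, ht0]
    exact le_trans (hmemD t ⟨le_of_lt ht0, le_rfl⟩) hSDfin
  -- the difference quotient sequence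
  have hu_k : ∀ k : ℕ, ((k:ℝ)+1)⁻¹ ≠ 0 ∧ |((k:ℝ)+1)⁻¹| ≤ 1 ∧ |((k:ℝ)+1)⁻¹| = ((k:ℝ)+1)⁻¹ := by
    intro k
    have hk0 : (0:ℝ) < (k:ℝ) + 1 := by positivity
    refine ⟨inv_ne_zero (ne_of_gt hk0), ?_, abs_of_pos (inv_pos.2 hk0)⟩
    rw [abs_of_pos (inv_pos.2 hk0)]
    rw [inv_le_one_iff₀]
    right
    have : (0:ℝ) ≤ (k:ℝ) := Nat.cast_nonneg k
    linarith
  set w : ℕ → Ω → Fin n → ℝ := fun k ω =>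
    (((k:ℝ)+1)⁻¹)⁻¹ • (Y (x + ((k:ℝ)+1)⁻¹ • e) t ω - Y x t ω) with hwdef
  have hinvle : ∀ a m : ℕ, m ≤ a → ((a:ℝ)+1)⁻¹ ≤ ((m:ℝ)+1)⁻¹ := by
    intro a m hma
    have h1 : (0:ℝ) < (m:ℝ) + 1 := by positivity
    have h2 : ((m:ℝ)+1) ≤ ((a:ℝ)+1) := by
      have : (m:ℝ) ≤ (a:ℝ) := Nat.cast_le.2 hma
      linarith
    exact inv_anti₀ h1 h2
  have hwCauchy : ∀ ω : Ω, CauchySeq (fun k => w k ω) := by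
    intro ω
    refine cauchySeq_of_le_tendsto_0 (fun m : ℕ => Cc * (2 * ((m:ℝ)+1)⁻¹)) ?_ ?_
    · intro a b m ha hb
      rw [dist_eq_norm, hwdef]
      refine le_trans (hCauchy _ _ (hu_k a).1 (hu_k b).1 (hu_k a).2.1 (hu_k b).2.1 ω) ?_
      refine mul_le_mul_of_nonneg_left ?_ hCc0
      rw [(hu_k a).2.2, (hu_k b).2.2]
      have h1 := hinvle a m ha
      have h2 := hinvle b m hb
      linarith
    · have h0 : Tendsto (fun m : ℕ => ((m:ℝ)+1)⁻¹) atTop (𝓝 0) := by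
        have := tendsto_one_div_add_atTop_nhds_zero_nat (𝕜 := ℝ)
        simpa [one_div] using this
      have h1 : Tendsto (fun m : ℕ => Cc * (2 * ((m:ℝ)+1)⁻¹)) atTop (𝓝 (Cc * (2 * 0))) :=
        (tendsto_const_nhds.mul (tendsto_const_nhds.mul h0))
      simpa using h1
  set DY : Ω → Fin n → ℝ := fun ω => limUnder atTop (fun k => w k ω) with hDYdef
  have hwtend : ∀ ω : Ω, Tendsto (fun k => w k ω) atTop (𝓝 (DY ω)) :=
    fun ω => (hwCauchy ω).tendsto_limUnder
  have hKey : ∀ u : ℝ, u ≠ 0 → |u| ≤ 1 → ∀ ω : Ω,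
      ‖u⁻¹ • (Y (x + u • e) t ω - Y x t ω) - DY ω‖ ≤ Cc * |u| := by
    intro u hu hu1 ω
    have hlim1 : Tendsto (fun k : ℕ => ‖u⁻¹ • (Y (x + u • e) t ω - Y x t ω) - w k ω‖) atTop
        (𝓝 ‖u⁻¹ • (Y (x + u • e) t ω - Y x t ω) - DY ω‖) :=
      (tendsto_const_nhds.sub (hwtend ω)).norm
    have h0 : Tendsto (fun m : ℕ => ((m:ℝ)+1)⁻¹) atTop (𝓝 0) := by
      have := tendsto_one_div_add_atTop_nhds_zero_nat (𝕜 := ℝ)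
      simpa [one_div] using this
    have hlim2 : Tendsto (fun k : ℕ => Cc * (|u| + ((k:ℝ)+1)⁻¹)) atTop
        (𝓝 (Cc * (|u| + 0))) := tendsto_const_nhds.mul (tendsto_const_nhds.add h0)
    have hle := le_of_tendsto_of_tendsto' hlim1 hlim2 (fun k => by
      rw [hwdef]
      refine le_trans (hCauchy u _ hu (hu_k k).1 hu1 (hu_k k).2.1 ω) ?_
      rw [(hu_k k).2.2])
    simpa using hle
  have hDYbound : ∀ ω : Ω, ‖DY ω‖ ≤ 2 := by
    intro ω
    refine le_of_tendsto (hwtend ω).norm (Filter.Eventually.of_forall fun k => ?_)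
    rw [hwdef]
    show ‖(((k:ℝ)+1)⁻¹)⁻¹ • (Y (x + ((k:ℝ)+1)⁻¹ • e) t ω - Y x t ω)‖ ≤ 2
    rw [norm_smul, Real.norm_eq_abs, abs_inv, (hu_k k).2.2]
    have h3 := hZbdd _ (hu_k k).2.1 ω t ⟨le_of_lt ht0, le_rfl⟩
    have hk0 : (0:ℝ) < ((k:ℝ)+1)⁻¹ := by positivity
    rw [inv_mul_le_iff₀ hk0]
    rw [(hu_k k).2.2] at h3
    linarith
  -- measurability and integrability
  have hwmeas : ∀ k : ℕ, Measurable (w k) := by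
    intro k
    have h := ((hYmeas (x + ((k:ℝ)+1)⁻¹ • e) t).sub (hYmeas x t)).const_smul
      ((((k:ℝ)+1)⁻¹)⁻¹)
    exact h
  have hDYmeas : Measurable DY :=
    measurable_of_tendsto_metrizable hwmeas (tendsto_pi_nhds.2 hwtend)
  have hpg_cont : ∀ j : Fin n, Continuous (pderiv' j g) := by
    intro j
    have : ContDiff ℝ 1 (pderiv' j g) := contDiff_pderiv' j (by exact_mod_cast hg)
    exact this.continuous
  have hψmeas : Measurable (fun ω => fderiv ℝ g (Y x t ω) (DY ω)) := by
    have hrepr : (fun ω => fderiv ℝ g (Y x t ω) (DY ω))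
        = fun ω => ∑ j, DY ω j * pderiv' j g (Y x t ω) := by
      funext ω
      rw [clm_eq_sum]
      rfl
    rw [hrepr]
    refine Finset.measurable_sum _ fun j _ => ?_
    exact ((measurable_pi_apply j).comp hDYmeas).mul
      ((hpg_cont j).measurable.comp (hYmeas x t))
  have hψint : Integrable (fun ω => fderiv ℝ g (Y x t ω) (DY ω)) P := by
    refine Integrable.mono' (integrable_const (Cg * 2)) hψmeas.aestronglyMeasurable
      (Filter.Eventually.of_forall fun ω => ?_)
    calc ‖fderiv ℝ g (Y x t ω) (DY ω)‖ ≤ ‖fderiv ℝ g (Y x t ω)‖ * ‖DY ω‖ :=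
          (fderiv ℝ g (Y x t ω)).le_opNorm _
      _ ≤ Cg * 2 := mul_le_mul (hCg _).2.1 (hDYbound ω) (norm_nonneg _) hCg0
  have hgint : ∀ z : Fin n → ℝ, Integrable (fun ω => g (Y z t ω)) P := by
    intro z
    refine Integrable.mono' (integrable_const Cg)
      (hg.continuous.measurable.comp (hYmeas z t)).aestronglyMeasurable
      (Filter.Eventually.of_forall fun ω => ?_)
    rw [Real.norm_eq_abs]
    exact (hCg _).1
  refine ⟨DY, ?_, ?_⟩
  · -- pathwise convergence of difference quotients
    intro ω
    rw [tendsto_iff_dist_tendsto_zero]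
    have hsq : Tendsto (fun u : ℝ => Cc * |u|) (𝓝[≠] (0:ℝ)) (𝓝 0) := by
      have h1 : Tendsto (fun u : ℝ => Cc * |u|) (𝓝 (0:ℝ)) (𝓝 (Cc * |0|)) :=
        (continuous_const.mul continuous_abs).tendsto 0
      simpa using h1.mono_left nhdsWithin_le_nhds
    refine tendsto_of_tendsto_of_tendsto_of_le_of_le' tendsto_const_nhds hsq
      (Filter.Eventually.of_forall fun u => dist_nonneg) ?_
    have h1 : ∀ᶠ u : ℝ in 𝓝[≠] (0:ℝ), |u| ≤ 1 := by
      have h2 : ∀ᶠ u : ℝ in 𝓝 (0:ℝ), |u| ≤ 1 := by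
        filter_upwards [Metric.ball_mem_nhds (0:ℝ) one_pos] with u hu
        rw [Metric.mem_ball, Real.dist_eq, sub_zero] at hu
        exact le_of_lt hu
      exact h2.filter_mono nhdsWithin_le_nhds
    filter_upwards [h1, self_mem_nhdsWithin] with u hu1 hune
    rw [dist_eq_norm]
    exact hKey u hune hu1 ω
  · -- differentiability of the smoothed semigroup
    rw [hasDerivAt_iff_isLittleO]
    set A : ℝ := ∫ ω, fderiv ℝ g (Y x t ω) (DY ω) ∂P with hAdef
    have hquad : ∀ u : ℝ, |u| ≤ 1 →
        |(∫ ω, g (Y (x + u • e) t ω) ∂P) - (∫ ω, g (Y x t ω) ∂P) - u * A|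
          ≤ (4 * Cg + Cg * Cc) * u ^ 2 := by
      intro u hu1
      rcases eq_or_ne u 0 with rfl | hu
      · simp
      have hpt : ∀ ω : Ω,
          |g (Y (x + u • e) t ω) - g (Y x t ω) - u * fderiv ℝ g (Y x t ω) (DY ω)|
            ≤ (4 * Cg + Cg * Cc) * u ^ 2 := by
        intro ω
        have htau := hgTay (Y (x + u • e) t ω) (Y x t ω)
        have hZt := hZbdd u hu1 ω t ⟨le_of_lt ht0, le_rfl⟩
        have hK2 := hKey u hu hu1 ω
        have hsplit : g (Y (x + u • e) t ω) - g (Y x t ω)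
            - u * fderiv ℝ g (Y x t ω) (DY ω)
            = (g (Y (x + u • e) t ω) - g (Y x t ω)
                - fderiv ℝ g (Y x t ω) (Y (x + u • e) t ω - Y x t ω))
              + fderiv ℝ g (Y x t ω) ((Y (x + u • e) t ω - Y x t ω) - u • DY ω) := by
          have hms : fderiv ℝ g (Y x t ω) ((Y (x + u • e) t ω - Y x t ω) - u • DY ω)
              = fderiv ℝ g (Y x t ω) (Y (x + u • e) t ω - Y x t ω)
                - u * fderiv ℝ g (Y x t ω) (DY ω) := by
            rw [(fderiv ℝ g (Y x t ω)).map_sub, (fderiv ℝ g (Y x t ω)).map_smul]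
            rfl
          rw [hms]
          ring
        rw [hsplit]
        refine le_trans (abs_add_le _ _) ?_
        have h1 : |g (Y (x + u • e) t ω) - g (Y x t ω)
            - fderiv ℝ g (Y x t ω) (Y (x + u • e) t ω - Y x t ω)| ≤ Cg * (2 * |u|) ^ 2 :=
          htau.trans (mul_le_mul_of_nonneg_left
            (pow_le_pow_left₀ (norm_nonneg _) hZt 2) hCg0)
        have hnorm2 : ‖(Y (x + u • e) t ω - Y x t ω) - u • DY ω‖ ≤ Cc * u ^ 2 := by
          have hfact : (Y (x + u • e) t ω - Y x t ω) - u • DY ω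
              = u • (u⁻¹ • (Y (x + u • e) t ω - Y x t ω) - DY ω) := by
            rw [smul_sub, smul_smul, mul_inv_cancel₀ hu, one_smul]
          rw [hfact, norm_smul, Real.norm_eq_abs]
          calc |u| * ‖u⁻¹ • (Y (x + u • e) t ω - Y x t ω) - DY ω‖
              ≤ |u| * (Cc * |u|) := mul_le_mul_of_nonneg_left hK2 (abs_nonneg u)
            _ = Cc * u ^ 2 := by rw [sq, ← abs_mul_abs_self]; ring
        have h2 : |fderiv ℝ g (Y x t ω) ((Y (x + u • e) t ω - Y x t ω) - u • DY ω)|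
            ≤ Cg * (Cc * u ^ 2) := by
          calc |fderiv ℝ g (Y x t ω) ((Y (x + u • e) t ω - Y x t ω) - u • DY ω)|
              ≤ ‖fderiv ℝ g (Y x t ω)‖ * ‖(Y (x + u • e) t ω - Y x t ω) - u • DY ω‖ :=
                (fderiv ℝ g (Y x t ω)).le_opNorm _
            _ ≤ Cg * (Cc * u ^ 2) := mul_le_mul (hCg _).2.1 hnorm2 (norm_nonneg _) hCg0
        have h3 : Cg * (2 * |u|) ^ 2 = 4 * Cg * u ^ 2 := by
          rw [mul_pow, sq_abs]; ring
        rw [h3] at h1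
        have h4 : Cg * (Cc * u ^ 2) = (Cg * Cc) * u ^ 2 := by ring
        rw [h4] at h2
        nlinarith [sq_nonneg u]
      have hsub : (∫ ω, g (Y (x + u • e) t ω) ∂P) - (∫ ω, g (Y x t ω) ∂P) - u * A
          = ∫ ω, (g (Y (x + u • e) t ω) - g (Y x t ω)
              - u * fderiv ℝ g (Y x t ω) (DY ω)) ∂P := by
        have e1 : ∫ ω, (g (Y (x + u • e) t ω) - g (Y x t ω)
              - u * fderiv ℝ g (Y x t ω) (DY ω)) ∂P
            = (∫ ω, (g (Y (x + u • e) t ω) - g (Y x t ω)) ∂P)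
              - ∫ ω, u * fderiv ℝ g (Y x t ω) (DY ω) ∂P :=
          integral_sub ((hgint _).sub (hgint x)) (hψint.const_mul u)
        have e2 : ∫ ω, (g (Y (x + u • e) t ω) - g (Y x t ω)) ∂P
            = (∫ ω, g (Y (x + u • e) t ω) ∂P) - ∫ ω, g (Y x t ω) ∂P :=
          integral_sub (hgint _) (hgint x)
        have e3 : ∫ ω, u * fderiv ℝ g (Y x t ω) (DY ω) ∂P
            = u * ∫ ω, fderiv ℝ g (Y x t ω) (DY ω) ∂P :=
          integral_const_mul u _
        rw [hAdef, e1, e2, e3]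
      rw [hsub]
      have hb := norm_integral_le_of_norm_le_const (μ := P)
        (f := fun ω => g (Y (x + u • e) t ω) - g (Y x t ω)
          - u * fderiv ℝ g (Y x t ω) (DY ω)) (C := (4 * Cg + Cg * Cc) * u ^ 2)
        (Filter.Eventually.of_forall fun ω => by rw [Real.norm_eq_abs]; exact hpt ω)
      rw [probReal_univ, mul_one] at hb
      rwa [Real.norm_eq_abs] at hb
    have hev1 : ∀ᶠ u : ℝ in 𝓝 (0:ℝ), |u| ≤ 1 := by
      filter_upwards [Metric.ball_mem_nhds (0:ℝ) one_pos] with u hu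
      rw [Metric.mem_ball, Real.dist_eq, sub_zero] at hu
      exact le_of_lt hu
    have hbig : (fun u : ℝ => (∫ ω, g (Y (x + u • e) t ω) ∂P)
        - (∫ ω, g (Y (x + (0:ℝ) • e) t ω) ∂P) - (u - 0) • A) =O[𝓝 0] fun u => u ^ 2 := by
      rw [Asymptotics.isBigO_iff]
      refine ⟨4 * Cg + Cg * Cc, ?_⟩
      filter_upwards [hev1] with u hu
      have h2 := hquad u hu
      rw [Real.norm_eq_abs, Real.norm_eq_abs]
      simp only [zero_smul, add_zero, sub_zero, smul_eq_mul]
      calc |(∫ ω, g (Y (x + u • e) t ω) ∂P) - (∫ ω, g (Y x t ω) ∂P) - u * A|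
          ≤ (4 * Cg + Cg * Cc) * u ^ 2 := h2
        _ ≤ (4 * Cg + Cg * Cc) * |u ^ 2| := by
            refine mul_le_mul_of_nonneg_left (le_abs_self _) ?_
            nlinarith [mul_nonneg hCg0 hCc0]
    have hsmall : (fun u : ℝ => u ^ 2) =o[𝓝 (0:ℝ)] (fun u : ℝ => u - 0) := by
      simp only [sub_zero]
      rw [Asymptotics.isLittleO_iff]
      intro c hc
      have h1 : ∀ᶠ u : ℝ in 𝓝 (0:ℝ), |u| ≤ c := by
        filter_upwards [Metric.ball_mem_nhds (0:ℝ) hc] with u hu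
        rw [Metric.mem_ball, Real.dist_eq, sub_zero] at hu
        exact le_of_lt hu
      filter_upwards [h1] with u hu
      rw [Real.norm_eq_abs, Real.norm_eq_abs, sq, abs_mul]
      exact mul_le_mul_of_nonneg_right hu (abs_nonneg u)
    exact hbig.trans_isLittleO hsmall
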